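/- arXiv:1809.05697 — 2 statements merged into one kernel-verified Lean document; each statement's English description precedes it below -/
import Mathlib

section
/- For vectors a, b, ā, b̄ in ℝ³ with ‖ā − b̄‖ ≥ d > 0, if 2(ā − b̄)ᵀ(a − b) ≥ ‖ā − b̄‖² + d², then ‖a − b‖ ≥ d. -/
open EuclideanSpace in
/-- Linearized collision-avoidance constraint implies the original one:
for a, b, ā, b̄ ∈ ℝ³ with ‖ā − b̄‖ ≥ d > 0, if
2⟪ā − b̄, a − b⟫ ≥ ‖ā − b̄‖² + d², then ‖a − b‖ ≥ d. -/
theorem stmt_3 (a b abar bbar : EuclideanSpace ℝ (Fin 3)) (d : ℝ) (hd : 0 < d)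
    (hbar : ‖abar - bbar‖ ≥ d)
    (hlin : 2 * inner ℝ (abar - bbar) (a - b) ≥ ‖abar - bbar‖ ^ 2 + d ^ 2) :
    ‖a - b‖ ≥ d := by
  have hcs : inner ℝ (abar - bbar) (a - b) ≤ ‖abar - bbar‖ * ‖a - b‖ :=
    real_inner_le_norm _ _
  set x := ‖abar - bbar‖
  set y := ‖a - b‖
  have hx : 0 < x := lt_of_lt_of_le hd hbar
  nlinarith [sq_nonneg (x - d), sq_nonneg (x - y)]
end

section
/- In the setting of the previous symmetric trajectory result, the optimal solution can moreover be chosen so that there exists M ∈ {1,…,N/2} with g(x*[n]) ≤ g(x*[M]) = g(x*[M+1]) = ⋯ = g(x*[N/2]) for all n ∈ {1,…,M}; i.e., after reaching the maximal per-step value along the trajectory at time M, the state can be held constant (hovering) until time N/2. -/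
open Finset

private lemma refl_sum (f : ℕ → ℝ) (N a b : ℕ) (ha : 1 ≤ a) (hb : b ≤ N) :
    ∑ n ∈ Icc a b, f (N + 1 - n) = ∑ n ∈ Icc (N + 1 - b) (N + 1 - a), f n := by
  refine Finset.sum_nbij' (fun n => N + 1 - n) (fun n => N + 1 - n)
    (fun n hn => ?_) (fun n hn => ?_) (fun n hn => ?_) (fun n hn => ?_) (fun n hn => rfl) <;>
    simp only [mem_Icc] at * <;> omega

private lemma icc_split (f : ℕ → ℝ) (a b : ℕ) (hab : a ≤ b) :
    ∑ n ∈ Icc 1 b, f n = (∑ n ∈ Icc 1 a, f n) + ∑ n ∈ Icc (a + 1) b, f n := by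
  have h1 : Icc 1 a = Ioc 0 a := (Finset.Icc_add_one_left_eq_Ioc 0 a)
  have h2 : Icc (a + 1) b = Ioc a b := (Finset.Icc_add_one_left_eq_Ioc a b)
  have h3 : Icc 1 b = Ioc 0 b := (Finset.Icc_add_one_left_eq_Ioc 0 b)
  rw [h1, h2, h3, Finset.sum_Ioc_consecutive _ (Nat.zero_le a) hab]

/-- Half-symmetrization: replace the second half by the mirror of the first half. -/
private lemma half1lem {X : Type*} (N H : ℕ) (hH : N = 2 * H) (hH1 : 1 ≤ H)
    (C : X → X → Prop) (hsym : ∀ a b, C a b → C b a) (hrefl : ∀ a, C a a)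
    (x₀ : X) (g : X → ℝ) (x : ℕ → X)
    (h0 : x 0 = x₀) (h1 : x (N + 1) = x₀)
    (hC : ∀ n ∈ Icc 1 (N + 1), C (x (n - 1)) (x n)) :
    ∃ y : ℕ → X, y 0 = x₀ ∧ y (N + 1) = x₀ ∧
      (∀ n ∈ Icc 1 (N + 1), C (y (n - 1)) (y n)) ∧
      (∀ n ∈ Icc 1 N, y n = y (N + 1 - n)) ∧
      ∑ n ∈ Icc 1 N, g (y n) = 2 * ∑ n ∈ Icc 1 H, g (x n) := by
  set y : ℕ → X := fun n => if n ≤ H then x n else x (N + 1 - n) with hydef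
  have hy1 : ∀ n, n ≤ H → y n = x n := by
    intro n h; simp only [hydef]; rw [if_pos h]
  have hy2 : ∀ n, H < n → y n = x (N + 1 - n) := by
    intro n h; simp only [hydef]; rw [if_neg (by omega)]
  refine ⟨y, ?_, ?_, ?_, ?_, ?_⟩
  · rw [hy1 0 (by omega)]; exact h0
  · rw [hy2 (N + 1) (by omega)]
    have : N + 1 - (N + 1) = 0 := by omega
    rw [this]; exact h0
  · intro n hn
    simp only [mem_Icc] at hn
    rcases lt_trichotomy n (H + 1) with h | h | h
    · rw [hy1 n (by omega), hy1 (n - 1) (by omega)]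
      exact hC n (by simp only [mem_Icc]; omega)
    · subst h
      rw [hy1 (H + 1 - 1) (by omega), hy2 (H + 1) (by omega)]
      have : N + 1 - (H + 1) = H := by omega
      rw [this]
      have : H + 1 - 1 = H := by omega
      rw [this]; exact hrefl _
    · rw [hy2 n (by omega), hy2 (n - 1) (by omega)]
      have h2 : N + 1 - (n - 1) = N + 2 - n := by omega
      rw [h2]
      have := hC (N + 2 - n) (by simp only [mem_Icc]; omega)
      have h3 : N + 2 - n - 1 = N + 1 - n := by omega
      rw [h3] at this
      exact hsym _ _ this
  · intro n hn
    simp only [mem_Icc] at hn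
    by_cases h : n ≤ H
    · rw [hy1 n h, hy2 (N + 1 - n) (by omega)]
      have : N + 1 - (N + 1 - n) = n := by omega
      rw [this]
    · rw [hy2 n (by omega), hy1 (N + 1 - n) (by omega)]
  · rw [icc_split _ H N (by omega)]
    have e1 : ∑ n ∈ Icc 1 H, g (y n) = ∑ n ∈ Icc 1 H, g (x n) :=
      Finset.sum_congr rfl fun n hn => by
        rw [hy1 n (by simp only [mem_Icc] at hn; omega)]
    have e2 : ∑ n ∈ Icc (H + 1) N, g (y n) = ∑ n ∈ Icc 1 H, g (x n) := by
      have e3 : ∑ n ∈ Icc (H + 1) N, g (y n) =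
          ∑ n ∈ Icc (H + 1) N, (fun k => g (x k)) (N + 1 - n) :=
        Finset.sum_congr rfl fun n hn => by
          rw [hy2 n (by simp only [mem_Icc] at hn; omega)]
      rw [e3, refl_sum (fun k => g (x k)) N (H + 1) N (by omega) le_rfl]
      have b1 : N + 1 - N = 1 := by omega
      have b2 : N + 1 - (H + 1) = H := by omega
      rw [b1, b2]
    rw [e1, e2]; ring

/-- Symmetrization preserving optimality. -/
private lemma symlem {X : Type*} (N H : ℕ) (hH : N = 2 * H) (hH1 : 1 ≤ H)
    (C : X → X → Prop) (hsym : ∀ a b, C a b → C b a) (hrefl : ∀ a, C a a)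
    (x₀ : X) (g : X → ℝ) (x : ℕ → X)
    (h0 : x 0 = x₀) (h1 : x (N + 1) = x₀)
    (hC : ∀ n ∈ Icc 1 (N + 1), C (x (n - 1)) (x n)) :
    ∃ y : ℕ → X, y 0 = x₀ ∧ y (N + 1) = x₀ ∧
      (∀ n ∈ Icc 1 (N + 1), C (y (n - 1)) (y n)) ∧
      (∀ n ∈ Icc 1 N, y n = y (N + 1 - n)) ∧
      ∑ n ∈ Icc 1 N, g (x n) ≤ ∑ n ∈ Icc 1 N, g (y n) := by
  set S1 := ∑ n ∈ Icc 1 H, g (x n) with hS1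
  set S2 := ∑ n ∈ Icc (H + 1) N, g (x n) with hS2
  have hsplit : ∑ n ∈ Icc 1 N, g (x n) = S1 + S2 := icc_split _ H N (by omega)
  by_cases hc : S2 ≤ S1
  · obtain ⟨y, hy0, hy1, hyC, hysym, hysum⟩ :=
      half1lem N H hH hH1 C hsym hrefl x₀ g x h0 h1 hC
    exact ⟨y, hy0, hy1, hyC, hysym, by rw [hsplit, hysum]; linarith⟩
  · -- use the reversed trajectory
    set xr : ℕ → X := fun n => x (N + 1 - n) with hxrdef
    have hr0 : xr 0 = x₀ := by simp only [hxrdef]; simpa using h1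
    have hr1 : xr (N + 1) = x₀ := by
      simp only [hxrdef]
      have : N + 1 - (N + 1) = 0 := by omega
      rw [this]; exact h0
    have hrC : ∀ n ∈ Icc 1 (N + 1), C (xr (n - 1)) (xr n) := by
      intro n hn
      simp only [mem_Icc] at hn
      simp only [hxrdef]
      have h2 : N + 1 - (n - 1) = N + 2 - n := by omega
      rw [h2]
      have := hC (N + 2 - n) (by simp only [mem_Icc]; omega)
      have h3 : N + 2 - n - 1 = N + 1 - n := by omega
      rw [h3] at this
      exact hsym _ _ this
    obtain ⟨y, hy0, hy1, hyC, hysym, hysum⟩ :=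
      half1lem N H hH hH1 C hsym hrefl x₀ g xr hr0 hr1 hrC
    have hrsum : ∑ n ∈ Icc 1 H, g (xr n) = S2 := by
      simp only [hxrdef]
      rw [refl_sum (fun k => g (x k)) N 1 H le_rfl (by omega)]
      have b1 : N + 1 - H = H + 1 := by omega
      have b2 : N + 1 - 1 = N := by omega
      rw [b1, b2]
    exact ⟨y, hy0, hy1, hyC, hysym, by rw [hsplit, hysum, hrsum]; linarith⟩

/-- Hovering: from a symmetric solution build a fly-hover-fly solution. -/
private lemma hoverlem {X : Type*} (N H : ℕ) (hH : N = 2 * H) (hH1 : 1 ≤ H)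
    (C : X → X → Prop) (hsym : ∀ a b, C a b → C b a) (hrefl : ∀ a, C a a)
    (x₀ : X) (g : X → ℝ) (x : ℕ → X)
    (h0 : x 0 = x₀) (h1 : x (N + 1) = x₀)
    (hC : ∀ n ∈ Icc 1 (N + 1), C (x (n - 1)) (x n))
    (hxsym : ∀ n ∈ Icc 1 N, x n = x (N + 1 - n)) :
    ∃ z : ℕ → X, z 0 = x₀ ∧ z (N + 1) = x₀ ∧
      (∀ n ∈ Icc 1 (N + 1), C (z (n - 1)) (z n)) ∧
      (∀ n ∈ Icc 1 N, z n = z (N + 1 - n)) ∧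
      (∑ n ∈ Icc 1 N, g (x n) ≤ ∑ n ∈ Icc 1 N, g (z n)) ∧
      ∃ M ∈ Icc 1 H, (∀ n ∈ Icc 1 M, g (z n) ≤ g (z M)) ∧
        (∀ m ∈ Icc M H, g (z m) = g (z M)) := by
  obtain ⟨M, hM, hmax⟩ := Finset.exists_max_image (Icc 1 H) (fun n => g (x n))
    ⟨1, by simp only [mem_Icc]; omega⟩
  simp only [mem_Icc] at hM
  set z : ℕ → X := fun n => if n ≤ M then x n else if n ≤ N + 1 - M then x M
    else x (N + 1 - n) with hzdef
  have hz1 : ∀ n, n ≤ M → z n = x n := by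
    intro n h; simp only [hzdef]; rw [if_pos h]
  have hz2 : ∀ n, M ≤ n → n ≤ N + 1 - M → z n = x M := by
    intro n hn hn'
    rcases eq_or_lt_of_le hn with h | h
    · rw [hz1 n (by omega)]; exact congrArg x h.symm
    · simp only [hzdef]; rw [if_neg (by omega), if_pos hn']
  have hz3 : ∀ n, N + 1 - M < n → z n = x (N + 1 - n) := by
    intro n h; simp only [hzdef]; rw [if_neg (by omega), if_neg (by omega)]
  refine ⟨z, ?_, ?_, ?_, ?_, ?_, M, by simp only [mem_Icc]; omega, ?_, ?_⟩
  · rw [hz1 0 (by omega)]; exact h0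
  · rw [hz3 (N + 1) (by omega)]
    have : N + 1 - (N + 1) = 0 := by omega
    rw [this]; exact h0
  · -- feasibility
    intro n hn
    simp only [mem_Icc] at hn
    rcases le_or_gt n M with h | h
    · rw [hz1 n h, hz1 (n - 1) (by omega)]
      exact hC n (by simp only [mem_Icc]; omega)
    · rcases le_or_gt n (N + 1 - M) with h' | h'
      · rw [hz2 n (by omega) h', hz2 (n - 1) (by omega) (by omega)]
        exact hrefl _
      · rw [hz3 n h']
        rcases eq_or_lt_of_le (show N + 1 - M ≤ n - 1 by omega) with h2 | h2
        · rw [hz2 (n - 1) (by omega) (by omega)]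
          have h3 : N + 1 - n = M - 1 := by omega
          rw [h3]
          exact hsym _ _ (by
            have := hC M (by simp only [mem_Icc]; omega)
            exact this)
        · rw [hz3 (n - 1) h2]
          have h3 : N + 1 - (n - 1) = N + 2 - n := by omega
          rw [h3]
          have := hC (N + 2 - n) (by simp only [mem_Icc]; omega)
          have h4 : N + 2 - n - 1 = N + 1 - n := by omega
          rw [h4] at this
          exact hsym _ _ this
  · -- symmetry
    intro n hn
    simp only [mem_Icc] at hn
    rcases le_or_gt n M with h | h
    · rcases eq_or_lt_of_le h with h2 | h2
      · subst h2
        rw [hz1 n le_rfl, hz2 (N + 1 - n) (by omega) (by omega)]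
      · rw [hz1 n h, hz3 (N + 1 - n) (by omega)]
        have : N + 1 - (N + 1 - n) = n := by omega
        rw [this]
    · rcases le_or_gt n (N + 1 - M) with h' | h'
      · rw [hz2 n (by omega) h', hz2 (N + 1 - n) (by omega) (by omega)]
      · rw [hz3 n h', hz1 (N + 1 - n) (by omega)]
  · -- sum comparison
    have hMN : 2 * M ≤ N := by omega
    set T := g (x M) with hT
    set A' := ∑ n ∈ Icc 1 (M - 1), g (x n) with hA'
    have hA : ∑ n ∈ Icc 1 M, g (x n) = A' + T := by
      have : M = (M - 1) + 1 := by omega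
      rw [this, Finset.sum_Icc_succ_top (by omega) (fun n => g (x n)), ← this]
    -- sum of z
    have hzsum : ∑ n ∈ Icc 1 N, g (z n)
        = A' + T + (N + 1 - 2 * M) * T + A' := by
      rw [icc_split _ (N + 1 - M) N (by omega), icc_split _ M (N + 1 - M) (by omega)]
      have e1 : ∑ n ∈ Icc 1 M, g (z n) = A' + T := by
        rw [← hA]
        exact Finset.sum_congr rfl fun n hn => by
          rw [hz1 n (by simp only [mem_Icc] at hn; omega)]
      have e2 : ∑ n ∈ Icc (M + 1) (N + 1 - M), g (z n) = (N + 1 - 2 * M) * T := by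
        have : ∑ n ∈ Icc (M + 1) (N + 1 - M), g (z n)
            = ∑ n ∈ Icc (M + 1) (N + 1 - M), T :=
          Finset.sum_congr rfl fun n hn => by
            simp only [mem_Icc] at hn
            rw [hz2 n (by omega) (by omega)]
        rw [this, Finset.sum_const, Nat.card_Icc, nsmul_eq_mul]
        have hcc : ((N + 1 - M + 1 - (M + 1) : ℕ) : ℝ) = (N : ℝ) + 1 - 2 * M := by
          have h : N + 1 - M + 1 - (M + 1) = N + 1 - 2 * M := by omega
          rw [h, Nat.cast_sub (by omega)]
          push_cast; ring
        rw [hcc]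
      have e3 : ∑ n ∈ Icc (N + 1 - M + 1) N, g (z n) = A' := by
        have e4 : ∑ n ∈ Icc (N + 1 - M + 1) N, g (z n)
            = ∑ n ∈ Icc (N + 1 - M + 1) N, (fun k => g (x k)) (N + 1 - n) :=
          Finset.sum_congr rfl fun n hn => by
            simp only [mem_Icc] at hn
            rw [hz3 n (by omega)]
        rw [e4, refl_sum (fun k => g (x k)) N (N + 1 - M + 1) N (by omega) le_rfl]
        have b1 : N + 1 - N = 1 := by omega
        have b2 : N + 1 - (N + 1 - M + 1) = M - 1 := by omega
        rw [b1, b2]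
      rw [e1, e2, e3]
    -- sum of x
    have hxsum2 : ∑ n ∈ Icc (H + 1) N, g (x n) = ∑ n ∈ Icc 1 H, g (x n) := by
      have e5 : ∑ n ∈ Icc (H + 1) N, g (x n)
          = ∑ n ∈ Icc (H + 1) N, (fun k => g (x k)) (N + 1 - n) :=
        Finset.sum_congr rfl fun n hn => by
          simp only [mem_Icc] at hn
          exact congrArg g (hxsym n (by simp only [mem_Icc]; omega))
      rw [e5, refl_sum (fun k => g (x k)) N (H + 1) N (by omega) le_rfl]
      have b1 : N + 1 - N = 1 := by omega
      have b2 : N + 1 - (H + 1) = H := by omega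
      rw [b1, b2]
    have hxsum : ∑ n ∈ Icc 1 N, g (x n) = 2 * ∑ n ∈ Icc 1 H, g (x n) := by
      rw [icc_split _ H N (by omega), hxsum2]; ring
    have hhalf : ∑ n ∈ Icc 1 H, g (x n)
        = A' + T + ∑ n ∈ Icc (M + 1) H, g (x n) := by
      rw [icc_split _ M H (by omega), hA]
    have htail : ∑ n ∈ Icc (M + 1) H, g (x n) ≤ (H - M) * T := by
      have := Finset.sum_le_card_nsmul (Icc (M + 1) H) (fun n => g (x n)) T
        (fun n hn => by
          simp only [mem_Icc] at hn
          exact hmax n (by simp only [mem_Icc]; omega))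
      rw [Nat.card_Icc, nsmul_eq_mul] at this
      have hc : H + 1 - (M + 1) = H - M := by omega
      rw [hc, Nat.cast_sub (by omega)] at this
      exact this
    rw [hzsum, hxsum, hhalf]
    have hNR : (N : ℝ) = 2 * H := by exact_mod_cast hH
    have hkey : ((N : ℝ) + 1 - 2 * M) * T = 2 * (((H : ℝ) - M) * T) + T := by
      rw [hNR]; ring
    linarith
  · -- max up to M
    intro n hn
    simp only [mem_Icc] at hn
    rw [hz1 n (by omega), hz1 M le_rfl]
    exact hmax n (by simp only [mem_Icc]; omega)
  · -- constant from M to H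
    intro m hm
    simp only [mem_Icc] at hm
    rw [hz1 M le_rfl, hz2 m (by omega) (by omega)]

/-- Fly-hover-fly optimality (Property 1, equation (9)): with a symmetric and
reflexive step constraint C, there is an optimal symmetric solution and an
M ∈ {1,…,N/2} such that g(x n) ≤ g(x M) for all n ≤ M and
g(x M) = g(x m) for all M ≤ m ≤ N/2. -/
theorem stmt_14 {X : Type*} (N : ℕ) (hN : 0 < N) (hNeven : Even N)
    (C : X → X → Prop) (hsym : ∀ a b, C a b → C b a) (hrefl : ∀ a, C a a)
    (x₀ : X) (g : X → ℝ) (B : ℝ) (hgbd : ∀ a, |g a| ≤ B)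
    (Feas : (ℕ → X) → Prop)
    (hFeas : ∀ x, Feas x ↔ (x 0 = x₀ ∧ x (N + 1) = x₀ ∧
      ∀ n ∈ Finset.Icc 1 (N + 1), C (x (n - 1)) (x n)))
    (hopt : ∃ x, Feas x ∧ ∀ y, Feas y →
      ∑ n ∈ Finset.Icc 1 N, g (y n) ≤ ∑ n ∈ Finset.Icc 1 N, g (x n)) :
    ∃ x, Feas x ∧
      (∀ y, Feas y →
        ∑ n ∈ Finset.Icc 1 N, g (y n) ≤ ∑ n ∈ Finset.Icc 1 N, g (x n)) ∧
      (∀ n ∈ Finset.Icc 1 N, x n = x (N + 1 - n)) ∧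
      ∃ M ∈ Finset.Icc 1 (N / 2),
        (∀ n ∈ Finset.Icc 1 M, g (x n) ≤ g (x M)) ∧
        (∀ m ∈ Finset.Icc M (N / 2), g (x m) = g (x M)) := by
  obtain ⟨H, hHeq⟩ := hNeven
  have hH : N = 2 * H := by omega
  have hH1 : 1 ≤ H := by omega
  have hHdiv : N / 2 = H := by omega
  obtain ⟨x, hxF, hxopt⟩ := hopt
  rw [hFeas] at hxF
  obtain ⟨hx0, hx1, hxC⟩ := hxF
  obtain ⟨y, hy0, hy1, hyC, hysym, hysum⟩ :=
    symlem N H hH hH1 C hsym hrefl x₀ g x hx0 hx1 hxC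
  obtain ⟨z, hz0, hz1, hzC, hzsym, hzsum, M, hM, hMmax, hMconst⟩ :=
    hoverlem N H hH hH1 C hsym hrefl x₀ g y hy0 hy1 hyC hysym
  refine ⟨z, (hFeas z).2 ⟨hz0, hz1, hzC⟩, ?_, hzsym, M, ?_, hMmax, ?_⟩
  · intro w hw
    calc ∑ n ∈ Icc 1 N, g (w n) ≤ ∑ n ∈ Icc 1 N, g (x n) := hxopt w hw
      _ ≤ ∑ n ∈ Icc 1 N, g (y n) := hysum
      _ ≤ ∑ n ∈ Icc 1 N, g (z n) := hzsum
  · rwa [hHdiv]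
  · rwa [hHdiv]
end
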